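/- Let p be a joint distribution on finite X1 × X2 × Y with R, U1, U2, S defined via a common optimizer q* ∈ Δ_p as R = I_{q*}(X1;X2;Y), U1 = I_{q*}(X1;Y|X2), U2 = I_{q*}(X2;Y|X1), S = I_p({X1,X2};Y) - I_{q*}({X1,X2};Y). Then R - S = I_p(X1;X2;Y), i.e., synergy minus redundancy equals the negative interaction information of p. -/
import Mathlib


open Finset

noncomputable section

namespace PaperPID

variable {Ω₁ Ω₂ Ω₃ : Type*} [Fintype Ω₁] [Fintype Ω₂] [Fintype Ω₃]

/-- Shannon entropy in bits of a finitely supported distribution given as a function. -/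
def ent {α : Type*} [Fintype α] (p : α → ℝ) : ℝ := -∑ a, p a * Real.logb 2 (p a)

/-- `p` is a probability distribution. -/
def IsProb {α : Type*} [Fintype α] (p : α → ℝ) : Prop := (∀ a, 0 ≤ p a) ∧ ∑ a, p a = 1

/-- marginal on the first coordinate -/
def m1 (p : Ω₁ × Ω₂ × Ω₃ → ℝ) : Ω₁ → ℝ := fun a => ∑ b, ∑ c, p (a, b, c)

/-- marginal on the second coordinate -/
def m2 (p : Ω₁ × Ω₂ × Ω₃ → ℝ) : Ω₂ → ℝ := fun b => ∑ a, ∑ c, p (a, b, c)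

/-- marginal on the third coordinate -/
def m3 (p : Ω₁ × Ω₂ × Ω₃ → ℝ) : Ω₃ → ℝ := fun c => ∑ a, ∑ b, p (a, b, c)

/-- marginal on coordinates (1,2) -/
def m12 (p : Ω₁ × Ω₂ × Ω₃ → ℝ) : Ω₁ × Ω₂ → ℝ := fun z => ∑ c, p (z.1, z.2, c)

/-- marginal on coordinates (1,3) -/
def m13 (p : Ω₁ × Ω₂ × Ω₃ → ℝ) : Ω₁ × Ω₃ → ℝ := fun z => ∑ b, p (z.1, b, z.2)

/-- marginal on coordinates (2,3) -/
def m23 (p : Ω₁ × Ω₂ × Ω₃ → ℝ) : Ω₂ × Ω₃ → ℝ := fun z => ∑ a, p (a, z.1, z.2)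

/-- mutual information I(X₁;X₂) -/
def I12 (p : Ω₁ × Ω₂ × Ω₃ → ℝ) : ℝ := ent (m1 p) + ent (m2 p) - ent (m12 p)

/-- mutual information I(X₁;Y) (Y the third coordinate) -/
def I13 (p : Ω₁ × Ω₂ × Ω₃ → ℝ) : ℝ := ent (m1 p) + ent (m3 p) - ent (m13 p)

/-- mutual information I(X₂;Y) -/
def I23 (p : Ω₁ × Ω₂ × Ω₃ → ℝ) : ℝ := ent (m2 p) + ent (m3 p) - ent (m23 p)

/-- joint mutual information I({X₁,X₂};Y) -/
def Ijoint (p : Ω₁ × Ω₂ × Ω₃ → ℝ) : ℝ := ent (m12 p) + ent (m3 p) - ent p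

/-- conditional mutual information I(X₁;X₂ | Y) -/
def CMI12_3 (p : Ω₁ × Ω₂ × Ω₃ → ℝ) : ℝ := ent (m13 p) + ent (m23 p) - ent p - ent (m3 p)

/-- conditional mutual information I(X₁;Y | X₂) -/
def CMI13_2 (p : Ω₁ × Ω₂ × Ω₃ → ℝ) : ℝ := ent (m12 p) + ent (m23 p) - ent p - ent (m2 p)

/-- conditional mutual information I(X₂;Y | X₁) -/
def CMI23_1 (p : Ω₁ × Ω₂ × Ω₃ → ℝ) : ℝ := ent (m12 p) + ent (m13 p) - ent p - ent (m1 p)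

/-- interaction information I(X₁;X₂;Y), defined as I(X₁;Y) - I(X₁;Y|X₂). -/
def interactionInfo (p : Ω₁ × Ω₂ × Ω₃ → ℝ) : ℝ := I13 p - CMI13_2 p

/-- Δ_{p_{1,2}}: distributions matching the (x₁,y) and (x₂,y) marginals of p. -/
def DeltaP (p : Ω₁ × Ω₂ × Ω₃ → ℝ) : Set (Ω₁ × Ω₂ × Ω₃ → ℝ) :=
  {q | IsProb q ∧ m13 q = m13 p ∧ m23 q = m23 p}

/-- Δ_{p_{1,2,12}}: distributions matching all pairwise marginals of p. -/
def DeltaAll (p : Ω₁ × Ω₂ × Ω₃ → ℝ) : Set (Ω₁ × Ω₂ × Ω₃ → ℝ) :=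
  {r | IsProb r ∧ m12 r = m12 p ∧ m13 r = m13 p ∧ m23 r = m23 p}

/-- Δ_{p_{12,y}}: couplings of the (x₁,x₂) marginal with the y marginal of p. -/
def DeltaCoup (p : Ω₁ × Ω₂ × Ω₃ → ℝ) : Set (Ω₁ × Ω₂ × Ω₃ → ℝ) :=
  {r | IsProb r ∧ m12 r = m12 p ∧ m3 r = m3 p}

/-- first marginal of a distribution on a product of two spaces -/
def mA {α β : Type*} [Fintype α] [Fintype β] (p : α × β → ℝ) : α → ℝ := fun a => ∑ b, p (a, b)

/-- second marginal of a distribution on a product of two spaces -/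
def mB {α β : Type*} [Fintype α] [Fintype β] (p : α × β → ℝ) : β → ℝ := fun b => ∑ a, p (a, b)

/-- mutual information of a joint distribution on a product of two spaces -/
def MI2 {α β : Type*} [Fintype α] [Fintype β] (p : α × β → ℝ) : ℝ := ent (mA p) + ent (mB p) - ent p
/-- with R, U₁, U₂, S defined via a common optimizer q* ∈ Δ_{p_{1,2}},
R - S = I_p(X₁;X₂;Y). -/
theorem redundancy_sub_synergy (p q : Ω₁ × Ω₂ × Ω₃ → ℝ) (hp : IsProb p)
    (hq : q ∈ DeltaP p) (R U1 U2 S : ℝ)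
    (hR : R = interactionInfo q)
    (hU1 : U1 = CMI13_2 q) (hU2 : U2 = CMI23_1 q)
    (hS : S = Ijoint p - Ijoint q) :
    R - S = interactionInfo p := by
  obtain ⟨hqp, h13, h23⟩ := hq
  have hm1 : m1 q = m1 p := by
    funext a
    have : ∀ r : Ω₁ × Ω₂ × Ω₃ → ℝ, m1 r a = ∑ c, m13 r (a, c) := by
      intro r; simp [m1, m13]; rw [Finset.sum_comm]
    rw [this q, this p, h13]
  have hm2 : m2 q = m2 p := by
    funext b
    have : ∀ r : Ω₁ × Ω₂ × Ω₃ → ℝ, m2 r b = ∑ c, m23 r (b, c) := by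
      intro r; simp [m2, m23]; rw [Finset.sum_comm]
    rw [this q, this p, h23]
  have hm3 : m3 q = m3 p := by
    funext c
    have : ∀ r : Ω₁ × Ω₂ × Ω₃ → ℝ, m3 r c = ∑ a, m13 r (a, c) := by
      intro r; simp [m3, m13]
    rw [this q, this p, h13]
  subst hR hS
  simp only [interactionInfo, I13, CMI13_2, Ijoint, hm1, hm2, hm3, h13, h23]
  ring

end PaperPID
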